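/- Let A be an n×n real matrix, Q an n×n positive semidefinite real matrix, P̄ an n×n positive semidefinite real matrix, and h(X) = A X Aᵀ + Q. Let λ ∈ (0,1), let s be a positive integer, and on a probability space let (λ_k)_{k≥1} be an i.i.d. sequence of {0,1}-valued random variables with P(λ_k = 1) = λ. Define P_0 = P̄ and, for 1 ≤ k ≤ s, P_k = P̄ if λ_k = 1 and P_k = h(P_{k−1}) if λ_k = 0. Then Σ_{k=0}^{s} E[trace(P_k)] = (1 + λs) · trace(P̄) + Σ_{i=1}^{s} (1 + λ(s − i)) (1−λ)^i · trace(h^i(P̄)). -/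

import Mathlib

open Matrix MeasureTheory ProbabilityTheory

/-- Length of the run of `false`s (dropouts) ending at time `k`. -/
def runLen {Ω : Type*} (lam : ℕ → Ω → Bool) : ℕ → Ω → ℕ
  | 0, _ => 0
  | k + 1, ω => if lam (k + 1) ω = true then 0 else runLen lam k ω + 1

lemma runLen_le {Ω : Type*} (lam : ℕ → Ω → Bool) : ∀ (k : ℕ) (ω : Ω), runLen lam k ω ≤ k
  | 0, _ => le_rfl
  | k + 1, ω => by
    simp only [runLen]
    split
    · omega
    · have := runLen_le lam k ω; omega

lemma runLen_eq_iff {Ω : Type*} (lam : ℕ → Ω → Bool) : ∀ (k : ℕ) (ω : Ω) (i : ℕ),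
    runLen lam k ω = i ↔
      i ≤ k ∧ (∀ j, k - i < j → j ≤ k → lam j ω = false) ∧ (i < k → lam (k - i) ω = true) := by
  intro k
  induction k with
  | zero =>
    intro ω i
    simp only [runLen]
    constructor
    · rintro rfl
      exact ⟨le_rfl, fun j h1 h2 => (by omega : False).elim, fun h => (by omega : False).elim⟩
    · rintro ⟨h1, -, -⟩; omega
  | succ k ih =>
    intro ω i
    by_cases hb : lam (k + 1) ω = true
    · rw [show runLen lam (k + 1) ω = 0 from by simp [runLen, hb]]
      constructor
      · rintro rfl
        refine ⟨Nat.zero_le _, fun j h1 h2 => (by omega : False).elim, fun _ => ?_⟩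
        simpa using hb
      · rintro ⟨h1, hall, -⟩
        by_contra hne
        have hf : lam (k + 1) ω = false := hall (k + 1) (by omega) le_rfl
        simp [hf] at hb
    · have hb' : lam (k + 1) ω = false := by revert hb; cases lam (k + 1) ω <;> simp
      rw [show runLen lam (k + 1) ω = runLen lam k ω + 1 from by simp [runLen, hb']]
      constructor
      · intro h
        cases i with
        | zero => omega
        | succ i' => ?_
        have hR : runLen lam k ω = i' := by omega
        obtain ⟨h1, hall, htr⟩ := (ih ω i').mp hR
        refine ⟨by omega, ?_, ?_⟩
        · intro j hj1 hj2
          by_cases hjk : j = k + 1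
          · rw [hjk]; exact hb'
          · exact hall j (by omega) (by omega)
        · intro hik
          have e : k + 1 - (i' + 1) = k - i' := by omega
          rw [e]; exact htr (by omega)
      · rintro ⟨h1, hall, htr⟩
        cases i with
        | zero =>
          have ht := htr (by omega)
          rw [Nat.sub_zero] at ht
          simp [hb'] at ht
        | succ i' =>
          have hR : runLen lam k ω = i' := (ih ω i').mpr
            ⟨by omega, fun j hj1 hj2 => hall j (by omega) (by omega), fun hik => by
              have e : k + 1 - (i' + 1) = k - i' := by omega
              have := htr (by omega)
              rwa [e] at this⟩
          omega

lemma sum_block_algebra (l : ℝ) (T : ℕ → ℝ) (s : ℕ) :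
    T 0 + ∑ k ∈ Finset.Icc 1 s,
        (l * ∑ i ∈ Finset.range k, (1 - l) ^ i * T i + (1 - l) ^ k * T k)
      = (1 + l * (s : ℝ)) * T 0 +
        ∑ i ∈ Finset.Icc 1 s, (1 + l * ((s : ℝ) - (i : ℝ))) * (1 - l) ^ i * T i := by
  induction s with
  | zero => simp
  | succ n ih =>
    rw [Finset.sum_Icc_succ_top (by omega : 1 ≤ n + 1),
      Finset.sum_Icc_succ_top (by omega : 1 ≤ n + 1)]
    have hrange : ∑ i ∈ Finset.range (n + 1), (1 - l) ^ i * T i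
        = T 0 + ∑ i ∈ Finset.Icc 1 n, (1 - l) ^ i * T i := by
      rw [show Finset.range (n + 1) = insert 0 (Finset.Icc 1 n) by
        ext x; simp [Finset.mem_range, Finset.mem_Icc]; omega]
      rw [Finset.sum_insert (by simp)]
      simp
    have hsplit : ∑ i ∈ Finset.Icc 1 n, (1 + l * (((n : ℝ) + 1) - (i : ℝ))) * (1 - l) ^ i * T i
        = ∑ i ∈ Finset.Icc 1 n, (1 + l * ((n : ℝ) - (i : ℝ))) * (1 - l) ^ i * T i
          + l * ∑ i ∈ Finset.Icc 1 n, (1 - l) ^ i * T i := by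
      rw [Finset.mul_sum, ← Finset.sum_add_distrib]
      refine Finset.sum_congr rfl fun i _ => ?_
      ring
    push_cast
    rw [hrange, hsplit]
    linarith [ih]

/-- Expected aggregate estimation cost of one block of the offline schedule:
high power at time `0` (so `P 0 = P̄`) followed by `s` low-power slots with
i.i.d. Bernoulli(λ) arrivals gives
`∑_{k=0}^{s} E[trace (P k)] = (1 + λ s) trace P̄
  + ∑_{i=1}^{s} (1 + λ (s - i)) (1-λ)^i trace (h^[i] P̄)`. -/
theorem offline_block_expected_cost {d : ℕ}
    (A Q Pbar : Matrix (Fin d) (Fin d) ℝ) (hQ : Q.PosSemidef) (hPbar : Pbar.PosSemidef)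
    (lam_prob : ℝ) (hlam0 : 0 < lam_prob) (hlam1 : lam_prob < 1)
    (s : ℕ) (hs : 1 ≤ s)
    {Ω : Type*} [MeasurableSpace Ω] (μ : Measure Ω) [IsProbabilityMeasure μ]
    (lam : ℕ → Ω → Bool) (hmeas : ∀ k, Measurable (lam k))
    (hindep : iIndepFun lam μ)
    (hdist : ∀ k, 1 ≤ k → (μ {ω | lam k ω = true}).toReal = lam_prob)
    (P : ℕ → Ω → Matrix (Fin d) (Fin d) ℝ)
    (hP0 : ∀ ω, P 0 ω = Pbar)
    (hPrec : ∀ k ω, k + 1 ≤ s → P (k + 1) ω =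
      if lam (k + 1) ω = true then Pbar else A * P k ω * Aᵀ + Q) :
    ∑ k ∈ Finset.range (s + 1), ∫ ω, (P k ω).trace ∂μ =
      (1 + lam_prob * (s : ℝ)) * Pbar.trace +
        ∑ i ∈ Finset.Icc 1 s,
          (1 + lam_prob * ((s : ℝ) - (i : ℝ))) * (1 - lam_prob) ^ i *
            ((fun Z => A * Z * Aᵀ + Q)^[i] Pbar).trace := by
  -- abbreviation for the trace values
  have T : ℕ → ℝ := fun i => ((fun Z => A * Z * Aᵀ + Q)^[i] Pbar).trace
  -- measurability of runLen
  have hRmeas : ∀ k, Measurable (runLen lam k) := by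
    intro k
    induction k with
    | zero => exact measurable_const
    | succ k ih =>
      have e : runLen lam (k + 1) = fun ω => if lam (k + 1) ω = true then 0
          else runLen lam k ω + 1 := rfl
      rw [e]
      exact Measurable.ite (hmeas (k + 1) (measurableSet_singleton true)) measurable_const
        (ih.add measurable_const)
  -- the two basic probabilities
  have hmu_true : ∀ j, 1 ≤ j → (μ (lam j ⁻¹' {true})).toReal = lam_prob := by
    intro j hj
    have e : lam j ⁻¹' ({true} : Set Bool) = {ω | lam j ω = true} := by
      ext ω; simp
    rw [e]; exact hdist j hj
  have hmu_false : ∀ j, 1 ≤ j → (μ (lam j ⁻¹' {false})).toReal = 1 - lam_prob := by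
    intro j hj
    have e : lam j ⁻¹' ({false} : Set Bool) = (lam j ⁻¹' ({true} : Set Bool))ᶜ := by
      ext ω; cases h : lam j ω <;> simp [h]
    rw [e, prob_compl_eq_one_sub (hmeas j (measurableSet_singleton true))]
    rw [ENNReal.toReal_sub_of_le prob_le_one ENNReal.one_ne_top, ENNReal.toReal_one,
      hmu_true j hj]
  -- the distribution of runLen
  have hRv : ∀ k i, 1 ≤ k → i ≤ k → (μ {ω | runLen lam k ω = i}).toReal =
      if i = k then (1 - lam_prob) ^ k else lam_prob * (1 - lam_prob) ^ i := by
    intro k i hk1 hik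
    by_cases hik' : i = k
    · subst hik'
      have hset : {ω | runLen lam i ω = i}
          = ⋂ j ∈ Finset.Icc 1 i, lam j ⁻¹' ({false} : Set Bool) := by
        ext ω
        simp only [Set.mem_setOf_eq, runLen_eq_iff, Set.mem_iInter, Set.mem_preimage,
          Set.mem_singleton_iff, Finset.mem_Icc]
        constructor
        · rintro ⟨-, hall, -⟩ j hj
          exact hall j (by omega) hj.2
        · intro hall
          exact ⟨le_rfl, fun j h1 h2 => hall j ⟨by omega, h2⟩, fun h => absurd h (lt_irrefl _)⟩
      rw [hset, hindep.meas_biInter (fun j _ => ⟨{false}, measurableSet_singleton _, rfl⟩),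
        ENNReal.toReal_prod, if_pos rfl,
        Finset.prod_congr rfl (fun j hj => hmu_false j (Finset.mem_Icc.mp hj).1),
        Finset.prod_const, Nat.card_Icc]
      norm_num
    · have hilt : i < k := by omega
      have hset : {ω | runLen lam k ω = i}
          = ⋂ j ∈ Finset.Icc (k - i) k,
              lam j ⁻¹' (if j = k - i then ({true} : Set Bool) else {false}) := by
        ext ω
        simp only [Set.mem_setOf_eq, runLen_eq_iff, Set.mem_iInter, Set.mem_preimage,
          Finset.mem_Icc]
        constructor
        · rintro ⟨-, hall, htr⟩ j hj
          by_cases hje : j = k - i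
          · subst hje
            rw [if_pos rfl]
            exact htr hilt
          · rw [if_neg hje]
            exact hall j (by omega) hj.2
        · intro hall
          refine ⟨hik, ?_, ?_⟩
          · intro j h1 h2
            have := hall j ⟨by omega, h2⟩
            rw [if_neg (by omega)] at this
            simpa using this
          · intro _
            have := hall (k - i) ⟨le_rfl, by omega⟩
            rw [if_pos rfl] at this
            simpa using this
      have hins : Finset.Icc (k - i) k = insert (k - i) (Finset.Icc (k - i + 1) k) := by
        ext x; simp only [Finset.mem_Icc, Finset.mem_insert]; omega
      rw [hset, hindep.meas_biInter (fun j _ =>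
          ⟨if j = k - i then ({true} : Set Bool) else {false},
            by split <;> exact measurableSet_singleton _, rfl⟩),
        ENNReal.toReal_prod, hins, Finset.prod_insert (by simp), if_pos rfl,
        hmu_true (k - i) (by omega)]
      have e2 : ∏ j ∈ Finset.Icc (k - i + 1) k,
          (μ (lam j ⁻¹' (if j = k - i then ({true} : Set Bool) else {false}))).toReal
          = (1 - lam_prob) ^ i := by
        have e3 : ∀ j ∈ Finset.Icc (k - i + 1) k,
            (μ (lam j ⁻¹' (if j = k - i then ({true} : Set Bool) else {false}))).toReal
            = 1 - lam_prob := by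
          intro j hj
          have hj' := Finset.mem_Icc.mp hj
          rw [if_neg (by omega)]
          exact hmu_false j (by omega)
        rw [Finset.prod_congr rfl e3, Finset.prod_const, Nat.card_Icc,
          show k + 1 - (k - i + 1) = i from by omega]
      rw [e2, if_neg hik']
  -- pointwise value of P
  have hPval : ∀ k, k ≤ s → ∀ ω,
      P k ω = (fun Z => A * Z * Aᵀ + Q)^[runLen lam k ω] Pbar := by
    intro k
    induction k with
    | zero => intro _ ω; simp [runLen, hP0]
    | succ k ih =>
      intro hk ω
      rw [hPrec k ω hk]
      by_cases hb : lam (k + 1) ω = true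
      · rw [if_pos hb, show runLen lam (k + 1) ω = 0 from by simp [runLen, hb]]
        rfl
      · rw [if_neg hb, show runLen lam (k + 1) ω = runLen lam k ω + 1 from by
          simp [runLen, hb], Function.iterate_succ_apply', ih (by omega) ω]
  -- expectation of trace (P k)
  have hint : ∀ k, k ≤ s → ∫ ω, (P k ω).trace ∂μ =
      ∑ i ∈ Finset.range (k + 1), (μ {ω | runLen lam k ω = i}).toReal *
        ((fun Z => A * Z * Aᵀ + Q)^[i] Pbar).trace := by
    intro k hk
    have hsetm : ∀ i : ℕ, MeasurableSet {ω | runLen lam k ω = i} := fun i =>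
      hRmeas k (measurableSet_singleton i)
    have hpt : ∀ ω, (P k ω).trace = ∑ i ∈ Finset.range (k + 1),
        ({ω' | runLen lam k ω' = i}).indicator
          (fun _ => ((fun Z => A * Z * Aᵀ + Q)^[i] Pbar).trace) ω := by
      intro ω
      rw [Finset.sum_eq_single_of_mem (runLen lam k ω)
        (Finset.mem_range.mpr (by have := runLen_le lam k ω; omega))]
      · rw [Set.indicator_of_mem
          (show ω ∈ {ω' | runLen lam k ω' = runLen lam k ω} from rfl), hPval k hk ω]
      · intro b _ hb
        exact Set.indicator_of_notMem
          (s := {ω' | runLen lam k ω' = b}) (fun hmem => hb (Eq.symm hmem)) _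
    simp_rw [hpt]
    rw [integral_finset_sum _ (fun i _ => (integrable_const _).indicator (hsetm i))]
    exact Finset.sum_congr rfl fun i _ => by
      rw [integral_indicator_const _ (hsetm i), smul_eq_mul, measureReal_def]
  -- assemble
  rw [show Finset.range (s + 1) = insert 0 (Finset.Icc 1 s) from by
    ext x; simp only [Finset.mem_range, Finset.mem_insert, Finset.mem_Icc]; omega]
  rw [Finset.sum_insert (by simp)]
  have h0 : ∫ ω, (P 0 ω).trace ∂μ = Pbar.trace := by
    simp only [hP0]
    simp
  have hk2 : ∀ k ∈ Finset.Icc 1 s, ∫ ω, (P k ω).trace ∂μ =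
      lam_prob * ∑ i ∈ Finset.range k,
          (1 - lam_prob) ^ i * ((fun Z => A * Z * Aᵀ + Q)^[i] Pbar).trace
        + (1 - lam_prob) ^ k * ((fun Z => A * Z * Aᵀ + Q)^[k] Pbar).trace := by
    intro k hk
    obtain ⟨hk1, hks⟩ := Finset.mem_Icc.mp hk
    rw [hint k hks, Finset.sum_range_succ]
    have e1 : ∑ i ∈ Finset.range k, (μ {ω | runLen lam k ω = i}).toReal *
          ((fun Z => A * Z * Aᵀ + Q)^[i] Pbar).trace
        = lam_prob * ∑ i ∈ Finset.range k,
            (1 - lam_prob) ^ i * ((fun Z => A * Z * Aᵀ + Q)^[i] Pbar).trace := by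
      rw [Finset.mul_sum]
      refine Finset.sum_congr rfl fun i hi => ?_
      rw [hRv k i hk1 (le_of_lt (Finset.mem_range.mp hi)),
        if_neg (by have := Finset.mem_range.mp hi; omega)]
      ring
    rw [e1, hRv k k hk1 le_rfl, if_pos rfl]
  rw [h0, Finset.sum_congr rfl hk2]
  exact sum_block_algebra lam_prob
    (fun i => ((fun Z => A * Z * Aᵀ + Q)^[i] Pbar).trace) s
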